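/- Let 𝒢 be an (ε, α)-regular K_{s,t}^{(r)}-free r-uniform balanced r-partite hypergraph on rn vertices, let c > 0, and let 𝒢′ ⊆ 𝒢 be a subgraph with e(𝒢′) ≥ e(𝒢)/c. Then 𝒢′ contains an (ε + log_n(2c), 2αcr)-regular subgraph ℋ. -/

import Mathlib

open Finset
open scoped Classical

noncomputable section

variable {V : Type}

/-- Number of edges of the hypergraph `G` containing the vertex set `A`. -/
def degSet (G : Finset (Finset V)) (A : Finset V) : ℕ :=
  (G.filter fun e => A ⊆ e).card

/-- The neighborhood of an `(r-1)`-tuple `T`: vertices completing `T` to an edge. -/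
def linkN [Fintype V] (G : Finset (Finset V)) (T : Finset V) : Finset V :=
  Finset.univ.filter fun v => v ∉ T ∧ insert v T ∈ G

/-- Common link `CN_G(S)`: the `(r-1)`-sets forming an edge with every vertex of `S`. -/
def CN (r : ℕ) [Fintype V] (G : Finset (Finset V)) (S : Finset V) : Finset (Finset V) :=
  Finset.univ.filter fun T : Finset V =>
    T.card = r - 1 ∧ ∀ v ∈ S, v ∉ T ∧ insert v T ∈ G

/-- `cd_G(S|u)`: number of members of `CN_G(S)` containing `u`. -/
def cdOn (r : ℕ) [Fintype V] (G : Finset (Finset V)) (S : Finset V) (u : V) : ℕ :=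
  ((CN r G S).filter fun T => u ∈ T).card

/-- `C` is a vertex cover of the set family `E`. -/
def IsVertexCover (C : Finset V) (E : Finset (Finset V)) : Prop :=
  ∀ T ∈ E, ∃ v ∈ C, v ∈ T

/-- `G` contains no copy of `K_{s,t}^{(r)}`. -/
def KstFree (r s t : ℕ) (G : Finset (Finset V)) : Prop :=
  ¬ ∃ (X : Fin t → Finset V) (Y : Finset V),
      (∀ i, (X i).card = r - 1) ∧ Y.card = s ∧
      (∀ i j, i ≠ j → Disjoint (X i) (X j)) ∧
      (∀ i, Disjoint (X i) Y) ∧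
      ∀ i, ∀ y ∈ Y, insert y (X i) ∈ G

/-- `G` is a balanced `r`-partite `r`-uniform hypergraph with parts `parts` of size `n`. -/
def IsPartite (r n : ℕ) (parts : Fin r → Finset V) (G : Finset (Finset V)) : Prop :=
  (∀ i j, i ≠ j → Disjoint (parts i) (parts j)) ∧
  (∀ v : V, ∃ i, v ∈ parts i) ∧
  (∀ i, (parts i).card = n) ∧
  ∀ e ∈ G, ∀ i, (e ∩ parts i).card = 1

/-- `(ε, α)`-regularity in the sense of the paper. -/
def RegularHG (r s n : ℕ) (parts : Fin r → Finset V) (G : Finset (Finset V)) (ε α : ℝ) : Prop :=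
  (n : ℝ) ^ ((r : ℝ) - 1 / ((s : ℝ) - 1) - ε) ≤ (G.card : ℝ) ∧
  ∀ i : Fin r, ∃ Δ : ℝ,
    (n : ℝ) ^ (1 - 1 / ((s : ℝ) - 1) - ε) ≤ Δ ∧
    Δ ≤ (n : ℝ) ^ (1 - 1 / ((s : ℝ) - 1) + ε) ∧
    ∀ T : Finset V, T.card = r - 1 → Disjoint T (parts i) → 1 ≤ degSet G T →
      Δ / α ≤ (degSet G T : ℝ) ∧ (degSet G T : ℝ) ≤ Δ

/-- The pair `(T; v)` is `δ`-dense on `u` in `G`. -/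
def DenseOn (r s n : ℕ) [Fintype V] (G : Finset (Finset V)) (T : Finset V) (v u : V)
    (δ : ℝ) : Prop :=
  (degSet G T : ℝ) ^ (s - 1) / (r : ℝ) ≤
    ((((linkN G T).powersetCard s).filter fun S =>
      v ∈ S ∧ (n : ℝ) ^ ((r : ℝ) - 2 - 1 / ((s : ℝ) - 1) - δ) ≤ (cdOn r G S u : ℝ)).card : ℝ)

/-- The relation `V_i →_δ^{H,G} V_j`. -/
def Arrow (r s n : ℕ) [Fintype V] (parts : Fin r → Finset V) (H G : Finset (Finset V))
    (i j : Fin r) (δ : ℝ) : Prop :=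
  ∀ T : Finset V, T.card = r - 1 → Disjoint T (parts j) → 1 ≤ degSet H T →
    ∀ v ∈ linkN H T, ∀ u ∈ T ∩ parts i, DenseOn r s n G T v u δ


lemma degSet_mono {V : Type} {F F' : Finset (Finset V)} (h : F ⊆ F') (T : Finset V) :
    degSet F T ≤ degSet F' T :=
  Finset.card_le_card (Finset.filter_subset_filter _ h)

lemma deletion_lemma {V : Type} [Fintype V] (r : ℕ) (parts : Fin r → Finset V)
    (θ : Fin r → ℝ) (hθ : ∀ i, 0 ≤ θ i) (F : Finset (Finset V)) :
    ∃ K ⊆ F,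
      (∀ i : Fin r, ∀ T : Finset V, T.card = r - 1 → Disjoint T (parts i) →
        1 ≤ degSet K T → θ i ≤ (degSet K T : ℝ)) ∧
      (F.card : ℝ) ≤ (K.card : ℝ) +
        ∑ p ∈ ((Finset.univ : Finset (Fin r × Finset V)).filter
          (fun p => p.2.card = r - 1 ∧ Disjoint p.2 (parts p.1) ∧ 1 ≤ degSet F p.2)), θ p.1 := by
  induction F using Finset.strongInduction with
  | _ F ih =>
    by_cases hP : ∀ i : Fin r, ∀ T : Finset V, T.card = r - 1 → Disjoint T (parts i) →
        1 ≤ degSet F T → θ i ≤ (degSet F T : ℝ)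
    · exact ⟨F, Finset.Subset.refl F, hP, le_add_of_nonneg_right
        (Finset.sum_nonneg fun p _ => hθ p.1)⟩
    · push_neg at hP
      obtain ⟨i, T, hTcard, hTdisj, hTdeg, hTlt⟩ := hP
      set F' := F.filter (fun e => ¬ T ⊆ e) with hF'
      have hss : F' ⊆ F := Finset.filter_subset _ _
      have hcard : degSet F T + F'.card = F.card := by
        simpa [degSet] using Finset.card_filter_add_card_filter_not (s := F)
          (p := fun e => T ⊆ e)
      obtain ⟨e, hef⟩ := Finset.card_pos.mp hTdeg
      have heF : e ∈ F := (Finset.mem_filter.mp hef).1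
      have heTe : T ⊆ e := (Finset.mem_filter.mp hef).2
      have heF' : e ∉ F' := by
        rw [hF', Finset.mem_filter]
        push_neg
        intro _
        simpa using heTe
      have hssn : F' ⊂ F := (Finset.ssubset_iff_of_subset hss).mpr ⟨e, heF, heF'⟩
      obtain ⟨K, hKF', hKprop, hKbound⟩ := ih F' hssn
      refine ⟨K, hKF'.trans hss, hKprop, ?_⟩
      have hzero : degSet F' T = 0 := by
        rw [degSet, hF', Finset.filter_filter, Finset.card_eq_zero]
        exact Finset.filter_false_of_mem (fun e _ h => h.1 h.2)
      set BF := (Finset.univ : Finset (Fin r × Finset V)).filter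
          (fun p => p.2.card = r - 1 ∧ Disjoint p.2 (parts p.1) ∧ 1 ≤ degSet F p.2) with hBF
      set BF' := (Finset.univ : Finset (Fin r × Finset V)).filter
          (fun p => p.2.card = r - 1 ∧ Disjoint p.2 (parts p.1) ∧ 1 ≤ degSet F' p.2) with hBF'
      have hiT : (i, T) ∈ BF := by
        rw [hBF, Finset.mem_filter]
        exact ⟨Finset.mem_univ _, hTcard, hTdisj, hTdeg⟩
      have hsubBF : BF' ⊆ BF.erase (i, T) := by
        intro p hp
        rw [hBF', Finset.mem_filter] at hp
        obtain ⟨-, hc1, hd1, hdeg1⟩ := hp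
        rw [Finset.mem_erase]
        constructor
        · rintro rfl
          simp only [hzero] at hdeg1
          omega
        · rw [hBF, Finset.mem_filter]
          exact ⟨Finset.mem_univ _, hc1, hd1, le_trans hdeg1 (degSet_mono hss _)⟩
      have hsum1 : ∑ p ∈ BF', θ p.1 ≤ ∑ p ∈ BF.erase (i, T), θ p.1 :=
        Finset.sum_le_sum_of_subset_of_nonneg hsubBF (fun p _ _ => hθ p.1)
      have hsum2 : θ i + ∑ p ∈ BF.erase (i, T), θ p.1 = ∑ p ∈ BF, θ p.1 :=
        Finset.add_sum_erase BF (fun p => θ p.1) hiT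
      have hcR : (F.card : ℝ) = (F'.card : ℝ) + (degSet F T : ℝ) := by
        exact_mod_cast (by omega : F.card = F'.card + degSet F T)
      linarith

theorem stmt_10 {V : Type} [Fintype V] (r s t n : ℕ) (hr : 3 ≤ r) (hs : 3 ≤ s) (ht : 1 ≤ t)
    (hn : 2 ≤ n) (ε α c : ℝ) (hε : 0 < ε) (hα : 0 < α) (hc : 0 < c)
    (parts : Fin r → Finset V) (G G' : Finset (Finset V))
    (hpart : IsPartite r n parts G) (hreg : RegularHG r s n parts G ε α)
    (hfree : KstFree r s t G) (hsub : G' ⊆ G)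
    (he : (G.card : ℝ) / c ≤ (G'.card : ℝ)) :
    ∃ H ⊆ G', RegularHG r s n parts H (ε + Real.logb (n : ℝ) (2 * c))
      (2 * α * c * (r : ℝ)) := by
  classical
  obtain ⟨hGe, hreg2⟩ := hreg
  choose Δ hΔlo hΔhi hΔdeg using hreg2
  have hn2 : (2:ℝ) ≤ (n:ℝ) := by exact_mod_cast hn
  have hn1 : (1:ℝ) < (n:ℝ) := by linarith
  have hn0 : (0:ℝ) < (n:ℝ) := by linarith
  have hrpos : (0:ℝ) < (r:ℝ) := by
    have : (3:ℝ) ≤ (r:ℝ) := by exact_mod_cast hr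
    linarith
  have hΔpos : ∀ i, 0 < Δ i := fun i =>
    lt_of_lt_of_le (Real.rpow_pos_of_pos hn0 _) (hΔlo i)
  have hGpos : (0:ℝ) < (G.card:ℝ) := lt_of_lt_of_le (Real.rpow_pos_of_pos hn0 _) hGe
  have hG'leG : (G'.card:ℝ) ≤ (G.card:ℝ) := by exact_mod_cast Finset.card_le_card hsub
  have hc1 : 1 ≤ c := by
    by_contra h
    push_neg at h
    have : (G.card:ℝ) < (G.card:ℝ) / c := by
      rw [lt_div_iff₀ hc]; nlinarith
    linarith
  have hL : 0 ≤ Real.logb (n:ℝ) (2*c) := Real.logb_nonneg hn1 (by linarith)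
  set α' := 2*α*c*(r:ℝ) with hα'
  have hα'pos : 0 < α' := by
    rw [hα']; positivity
  set θ : Fin r → ℝ := fun i => Δ i / α' with hθdef
  have hθ0 : ∀ i, 0 ≤ θ i := fun i => le_of_lt (div_pos (hΔpos i) hα'pos)
  obtain ⟨H, hHG', hHprop, hHbound⟩ := deletion_lemma r parts θ hθ0 G'
  have hHsubG : H ⊆ G := hHG'.trans hsub
  -- Bound the sum of thresholds
  set Bi : Fin r → Finset (Finset V) := fun i =>
    (Finset.univ : Finset (Finset V)).filter
      (fun T => T.card = r - 1 ∧ Disjoint T (parts i) ∧ 1 ≤ degSet G' T) with hBidef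
  have hsplit : ∑ p ∈ ((Finset.univ : Finset (Fin r × Finset V)).filter
        (fun p => p.2.card = r - 1 ∧ Disjoint p.2 (parts p.1) ∧ 1 ≤ degSet G' p.2)), θ p.1
      = ∑ i : Fin r, ∑ T ∈ Bi i, θ i := by
    rw [Finset.sum_finset_product _ Finset.univ (fun i => Bi i)]
    intro p
    simp [hBidef, Finset.mem_filter]
  -- double counting: each edge contains at most one tuple of each type
  have hcount : ∀ i : Fin r, ∑ T ∈ Bi i, degSet G T ≤ G.card := by
    intro i
    have key : ∀ e ∈ G, ((Bi i).filter (fun T => T ⊆ e)).card ≤ 1 := by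
      intro e heG
      rw [Finset.card_le_one]
      have hecard : e.card ≤ r := by
        have hsubU : e ⊆ Finset.univ.biUnion (fun j => e ∩ parts j) := by
          intro v hv
          obtain ⟨j, hj⟩ := hpart.2.1 v
          exact Finset.mem_biUnion.mpr ⟨j, Finset.mem_univ j,
            Finset.mem_inter.mpr ⟨hv, hj⟩⟩
        calc e.card ≤ (Finset.univ.biUnion (fun j => e ∩ parts j)).card :=
              Finset.card_le_card hsubU
          _ ≤ ∑ j : Fin r, (e ∩ parts j).card := Finset.card_biUnion_le
          _ = ∑ _j : Fin r, 1 :=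
              Finset.sum_congr rfl (fun j _ => hpart.2.2.2 e heG j)
          _ = r := by simp
      have hepi : (e ∩ parts i).card = 1 := hpart.2.2.2 e heG i
      have hsd : (e ∩ parts i).card + (e \ parts i).card = e.card :=
        Finset.card_inter_add_card_sdiff e (parts i)
      have hkey2 : ∀ T ∈ (Bi i).filter (fun T => T ⊆ e), T = e \ parts i := by
        intro T hT
        rw [Finset.mem_filter] at hT
        obtain ⟨hTBi, hTe⟩ := hT
        rw [hBidef, Finset.mem_filter] at hTBi
        obtain ⟨-, hTc, hTd, -⟩ := hTBi
        have hTsub : T ⊆ e \ parts i := by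
          intro v hv
          exact Finset.mem_sdiff.mpr ⟨hTe hv, Finset.disjoint_left.mp hTd hv⟩
        exact Finset.eq_of_subset_of_card_le hTsub (by omega)
      intro T1 h1 T2 h2
      rw [hkey2 T1 h1, hkey2 T2 h2]
    calc ∑ T ∈ Bi i, degSet G T
        = ∑ T ∈ Bi i, ∑ e ∈ G, if T ⊆ e then 1 else 0 := by
          refine Finset.sum_congr rfl (fun T _ => ?_)
          rw [degSet, Finset.card_filter]
      _ = ∑ e ∈ G, ∑ T ∈ Bi i, if T ⊆ e then 1 else 0 := Finset.sum_comm
      _ = ∑ e ∈ G, ((Bi i).filter (fun T => T ⊆ e)).card := by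
          refine Finset.sum_congr rfl (fun e _ => ?_)
          rw [Finset.card_filter]
      _ ≤ ∑ _e ∈ G, 1 := Finset.sum_le_sum (fun e heG => key e heG)
      _ = G.card := by simp
  have hBicard : ∀ i : Fin r, ((Bi i).card : ℝ) * (Δ i / α) ≤ (G.card : ℝ) := by
    intro i
    have h1 : ∀ T ∈ Bi i, Δ i / α ≤ (degSet G T : ℝ) := by
      intro T hT
      rw [hBidef, Finset.mem_filter] at hT
      obtain ⟨-, hTc, hTd, hTdeg⟩ := hT
      exact (hΔdeg i T hTc hTd (le_trans hTdeg (degSet_mono hsub T))).1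
    calc ((Bi i).card : ℝ) * (Δ i / α) = (Bi i).card • (Δ i / α) := by
          rw [nsmul_eq_mul]
      _ ≤ ∑ T ∈ Bi i, (degSet G T : ℝ) := Finset.card_nsmul_le_sum _ _ _ h1
      _ ≤ (G.card : ℝ) := by exact_mod_cast hcount i
  have hsumbound : ∑ i : Fin r, ∑ T ∈ Bi i, θ i ≤ (G.card : ℝ) / (2*c) := by
    have hterm : ∀ i : Fin r, ∑ T ∈ Bi i, θ i ≤ (G.card : ℝ) / (2*c*(r:ℝ)) := by
      intro i
      have hΔne : Δ i ≠ 0 := ne_of_gt (hΔpos i)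
      have hαne : α ≠ 0 := ne_of_gt hα
      have hcne : c ≠ 0 := ne_of_gt hc
      have hrne : (r:ℝ) ≠ 0 := ne_of_gt hrpos
      have hBile : ((Bi i).card : ℝ) ≤ α * (G.card : ℝ) / Δ i := by
        rw [le_div_iff₀ (hΔpos i)]
        calc ((Bi i).card : ℝ) * Δ i = (((Bi i).card : ℝ) * (Δ i / α)) * α := by
              field_simp
          _ ≤ (G.card : ℝ) * α := mul_le_mul_of_nonneg_right (hBicard i) hα.le
          _ = α * (G.card : ℝ) := mul_comm _ _
      calc ∑ T ∈ Bi i, θ i = ((Bi i).card : ℝ) * (Δ i / α') := by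
            rw [Finset.sum_const, nsmul_eq_mul, hθdef]
        _ ≤ (α * (G.card : ℝ) / Δ i) * (Δ i / α') := by
            apply mul_le_mul_of_nonneg_right hBile
            exact le_of_lt (div_pos (hΔpos i) hα'pos)
        _ = (G.card : ℝ) / (2*c*(r:ℝ)) := by
            rw [hα']
            field_simp
    calc ∑ i : Fin r, ∑ T ∈ Bi i, θ i
        ≤ ∑ _i : Fin r, (G.card : ℝ) / (2*c*(r:ℝ)) := Finset.sum_le_sum (fun i _ => hterm i)
      _ = (r:ℝ) * ((G.card : ℝ) / (2*c*(r:ℝ))) := by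
          rw [Finset.sum_const, Finset.card_univ, Fintype.card_fin, nsmul_eq_mul]
      _ = (G.card : ℝ) / (2*c) := by
          field_simp
  have hHcard : (G.card:ℝ)/(2*c) ≤ (H.card:ℝ) := by
    have h1 : (G'.card : ℝ) ≤ (H.card : ℝ) + (G.card : ℝ) / (2*c) := by
      rw [hsplit] at hHbound
      linarith
    have h2 : (G.card:ℝ)/c = (G.card:ℝ)/(2*c) + (G.card:ℝ)/(2*c) := by
      field_simp
      ring
    linarith
  have h2c : (n:ℝ) ^ Real.logb (n:ℝ) (2*c) = 2*c :=
    Real.rpow_logb hn0 (ne_of_gt hn1) (by linarith)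
  refine ⟨H, hHG', ?_, ?_⟩
  · -- edge count
    have hexp : (r:ℝ) - 1/((s:ℝ)-1) - (ε + Real.logb (n:ℝ) (2*c))
        = ((r:ℝ) - 1/((s:ℝ)-1) - ε) - Real.logb (n:ℝ) (2*c) := by ring
    rw [hexp, Real.rpow_sub hn0, h2c]
    calc (n:ℝ) ^ ((r:ℝ) - 1/((s:ℝ)-1) - ε) / (2*c)
        ≤ (G.card:ℝ) / (2*c) :=
          (div_le_div_iff_of_pos_right (by linarith : (0:ℝ) < 2*c)).mpr hGe
      _ ≤ (H.card:ℝ) := hHcard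
  · intro i
    refine ⟨Δ i, ?_, ?_, ?_⟩
    · calc (n:ℝ) ^ (1 - 1/((s:ℝ)-1) - (ε + Real.logb (n:ℝ) (2*c)))
          ≤ (n:ℝ) ^ (1 - 1/((s:ℝ)-1) - ε) :=
            Real.rpow_le_rpow_of_exponent_le (le_of_lt hn1) (by linarith)
        _ ≤ Δ i := hΔlo i
    · calc Δ i ≤ (n:ℝ) ^ (1 - 1/((s:ℝ)-1) + ε) := hΔhi i
        _ ≤ (n:ℝ) ^ (1 - 1/((s:ℝ)-1) + (ε + Real.logb (n:ℝ) (2*c))) :=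
            Real.rpow_le_rpow_of_exponent_le (le_of_lt hn1) (by linarith)
    · intro T hTc hTd hTdeg
      have hdegG : 1 ≤ degSet G T := le_trans hTdeg (degSet_mono hHsubG T)
      constructor
      · exact hHprop i T hTc hTd hTdeg
      · calc (degSet H T : ℝ) ≤ (degSet G T : ℝ) := by exact_mod_cast degSet_mono hHsubG T
          _ ≤ Δ i := (hΔdeg i T hTc hTd hdegG).2

end
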